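/- Let $f_1, \dots, f_n: \mathbb{R}^d \to \mathbb{R}$ be differentiable and $L$-smooth with average $f = \frac{1}{n}\sum_i f_i$, and suppose $\frac{1}{n}\sum_{i=1}^n \|\nabla f_i(w) - \nabla f(w)\|^2 \leq \gamma_g^2$ for all $w$. Let $\lambda \geq 7L$ and let $\hat\theta_i(w)$ be the minimizer of $\theta \mapsto f_i(\theta) + \frac{\lambda}{2}\|\theta-w\|^2$, with Moreau envelope gradient $\nabla F_i^{(c)}(w) = \lambda(w - \hat\theta_i(w))$, and $\nabla F^{(c)}(w) = \frac{1}{n}\sum_i \nabla F_i^{(c)}(w)$. Then for all $w$: $\frac{1}{n}\sum_{i=1}^n \|\nabla F_i^{(c)}(w) - \nabla F^{(c)}(w)\|^2 \leq \frac{16\lambda^2}{\lambda^2 - 48L^2}\gamma_g^2$. -/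

import Mathlib

open InnerProductSpace

-- gradient of θ ↦ λ/2‖θ-w‖² shifted quadratic: fderiv form
lemma aux_fderiv_norm_sq {d : ℕ} (w x : EuclideanSpace ℝ (Fin d)) :
    HasFDerivAt (fun θ : EuclideanSpace ℝ (Fin d) => ‖θ - w‖ ^ 2)
      (InnerProductSpace.toDual ℝ _ ((2:ℝ) • (x - w))) x := by
  have h1 : HasFDerivAt (fun θ : EuclideanSpace ℝ (Fin d) => θ - w)
      (ContinuousLinearMap.id ℝ _) x := (hasFDerivAt_id x).sub_const w
  have h2 := h1.inner ℝ h1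
  have heq : (fun θ : EuclideanSpace ℝ (Fin d) => ‖θ - w‖ ^ 2)
      = fun θ => (inner ℝ (θ - w) (θ - w) : ℝ) := by
    funext θ; rw [real_inner_self_eq_norm_sq]
  rw [heq]
  refine h2.congr_fderiv ?_
  ext v
  simp only [ContinuousLinearMap.coe_comp', Function.comp_apply,
    ContinuousLinearMap.prod_apply, ContinuousLinearMap.coe_id', id_eq,
    fderivInnerCLM_apply, InnerProductSpace.toDual_apply_apply, real_inner_smul_left]
  rw [real_inner_comm v (x - w)]
  ring

lemma aux_stationary {d : ℕ} (fi : EuclideanSpace ℝ (Fin d) → ℝ) (lam : ℝ)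
    (hdiff : Differentiable ℝ fi) (w x : EuclideanSpace ℝ (Fin d))
    (hmin : ∀ θ, fi x + lam / 2 * ‖x - w‖ ^ 2 ≤ fi θ + lam / 2 * ‖θ - w‖ ^ 2) :
    lam • (w - x) = gradient fi x := by
  set φ : EuclideanSpace ℝ (Fin d) → ℝ := fun θ => fi θ + lam / 2 * ‖θ - w‖ ^ 2 with hφdef
  have hF : HasFDerivAt fi (InnerProductSpace.toDual ℝ _ (gradient fi x)) x :=
    hasGradientAt_iff_hasFDerivAt.mp (hdiff x).hasGradientAt
  have hq := aux_fderiv_norm_sq w x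
  have hφ : HasFDerivAt φ
      (InnerProductSpace.toDual ℝ _ (gradient fi x + lam • (x - w))) x := by
    have h := hF.add (hq.const_mul (lam / 2))
    refine h.congr_fderiv ?_
    symm
    rw [map_add]
    congr 1
    rw [← map_smul, smul_smul]
    norm_num
  have hloc : IsLocalMin φ x := Filter.Eventually.of_forall hmin
  have h0 : fderiv ℝ φ x = 0 := hloc.fderiv_eq_zero
  have h1 : fderiv ℝ φ x = InnerProductSpace.toDual ℝ _ (gradient fi x + lam • (x - w)) :=
    hφ.fderiv
  have h2 : gradient fi x + lam • (x - w) = 0 := by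
    have := h1.symm.trans h0
    simpa using (InnerProductSpace.toDual ℝ (EuclideanSpace ℝ (Fin d))).map_eq_zero_iff.mp this
  have : gradient fi x = - (lam • (x - w)) := by linear_combination (norm := module) h2
  rw [this, ← smul_neg, neg_sub]

lemma aux_final (L lam γg S nr : ℝ) (hL : 0 < L) (hlam : 7 * L ≤ lam) (hn : 0 < nr)
    (hS : 0 ≤ S) (hmain : (lam ^ 2 - 6 * L ^ 2) * S ≤ 3 * lam ^ 2 * (nr * γg ^ 2)) :
    S * (lam ^ 2 - 48 * L ^ 2) ≤ 16 * lam ^ 2 * γg ^ 2 * nr := by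
  nlinarith [sq_nonneg γg, mul_nonneg (mul_nonneg (sq_nonneg lam) hn.le) (sq_nonneg γg),
    mul_nonneg (mul_nonneg (mul_nonneg hL.le hL.le) hS) hL.le,
    mul_nonneg (mul_nonneg hL.le hL.le) hS]

theorem stmt_13 (d n : ℕ) (hn : 0 < n)
    (f : Fin n → EuclideanSpace ℝ (Fin d) → ℝ) (L lam γg : ℝ) (hL : 0 < L)
    (hdiff : ∀ i, Differentiable ℝ (f i))
    (hsmooth : ∀ i w u, ‖gradient (f i) w - gradient (f i) u‖ ≤ L * ‖w - u‖)
    (hdiv : ∀ w, (1 / (n : ℝ)) * ∑ i, ‖gradient (f i) w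
        - (n : ℝ)⁻¹ • ∑ j, gradient (f j) w‖ ^ 2 ≤ γg ^ 2)
    (hlam : 7 * L ≤ lam)
    (θhat : Fin n → EuclideanSpace ℝ (Fin d) → EuclideanSpace ℝ (Fin d))
    (hθhat : ∀ i w θ, f i (θhat i w) + lam / 2 * ‖θhat i w - w‖ ^ 2
        ≤ f i θ + lam / 2 * ‖θ - w‖ ^ 2)
    (w : EuclideanSpace ℝ (Fin d)) :
    (1 / (n : ℝ)) * ∑ i, ‖lam • (w - θhat i w)
        - (n : ℝ)⁻¹ • ∑ j, lam • (w - θhat j w)‖ ^ 2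
      ≤ 16 * lam ^ 2 / (lam ^ 2 - 48 * L ^ 2) * γg ^ 2 := by
  have hlam0 : 0 < lam := by nlinarith
  have hn' : (0:ℝ) < n := by exact_mod_cast hn
  have hden : 0 < lam ^ 2 - 48 * L ^ 2 := by nlinarith
  -- first-order condition
  have hkey : ∀ i, lam • (w - θhat i w) = gradient (f i) (θhat i w) := fun i =>
    aux_stationary (f i) lam (hdiff i) w (θhat i w) (hθhat i w)
  simp only [hkey]
  -- notation
  set E : Fin n → EuclideanSpace ℝ (Fin d) :=
    fun i => gradient (f i) (θhat i w) - (n : ℝ)⁻¹ • ∑ j, gradient (f j) (θhat j w) with hE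
  set θb : EuclideanSpace ℝ (Fin d) := (n : ℝ)⁻¹ • ∑ j, θhat j w with hθb
  -- E i = lam • (θb - θhat i w)
  have hEθ : ∀ i, E i = lam • (θb - θhat i w) := by
    intro i
    rw [hE]
    simp only [← hkey]
    rw [hθb, ← Finset.smul_sum]
    have hsum : ∑ j, (w - θhat j w) = (n : ℝ) • w - ∑ j, θhat j w := by
      rw [Finset.sum_sub_distrib, Finset.sum_const, Finset.card_univ, Fintype.card_fin,
        ← Nat.cast_smul_eq_nsmul ℝ]
    rw [hsum]
    match_scalars <;> field_simp <;> ring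
  have hdist : ∀ i, lam * ‖θhat i w - θb‖ = ‖E i‖ := by
    intro i
    rw [hEθ i, norm_smul, ← norm_neg (θb - θhat i w), neg_sub, Real.norm_eq_abs,
      abs_of_pos hlam0]
  classical
  set A : Fin n → EuclideanSpace ℝ (Fin d) :=
    fun i => gradient (f i) (θhat i w) - gradient (f i) θb with hA
  set B : Fin n → EuclideanSpace ℝ (Fin d) :=
    fun i => gradient (f i) θb - (n : ℝ)⁻¹ • ∑ j, gradient (f j) θb with hB
  set C : EuclideanSpace ℝ (Fin d) :=
    (n : ℝ)⁻¹ • ∑ j, (gradient (f j) θb - gradient (f j) (θhat j w)) with hC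
  have hdecomp : ∀ i, E i = A i + B i + C := by
    intro i
    simp only [hE, hA, hB, hC]
    rw [Finset.sum_sub_distrib, smul_sub]
    abel
  have hAb : ∀ i, ‖A i‖ ≤ (L / lam) * ‖E i‖ := by
    intro i
    have h := hsmooth i (θhat i w) θb
    have h2 : (L / lam) * ‖E i‖ = L * ‖θhat i w - θb‖ := by
      rw [← hdist i]; field_simp
    rw [h2]; exact h
  have hCb : ‖C‖ ≤ (L / lam) * ((n : ℝ)⁻¹ * ∑ j, ‖E j‖) := by
    have h1 : ‖C‖ ≤ (n : ℝ)⁻¹ * ∑ j, ‖gradient (f j) θb - gradient (f j) (θhat j w)‖ := by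
      rw [hC, norm_smul, Real.norm_eq_abs, abs_of_nonneg (by positivity)]
      gcongr
      exact norm_sum_le _ _
    have h2 : ∑ j, ‖gradient (f j) θb - gradient (f j) (θhat j w)‖
        ≤ ∑ j, (L / lam) * ‖E j‖ := by
      apply Finset.sum_le_sum
      intro j _
      have h3 := hsmooth j (θhat j w) θb
      have h4 : (L / lam) * ‖E j‖ = L * ‖θhat j w - θb‖ := by
        rw [← hdist j]; field_simp
      rw [h4, norm_sub_rev]
      exact h3
    calc ‖C‖ ≤ (n : ℝ)⁻¹ * ∑ j, ‖gradient (f j) θb - gradient (f j) (θhat j w)‖ := h1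
      _ ≤ (n : ℝ)⁻¹ * ∑ j, (L / lam) * ‖E j‖ :=
          mul_le_mul_of_nonneg_left h2 (by positivity)
      _ = (L / lam) * ((n : ℝ)⁻¹ * ∑ j, ‖E j‖) := by rw [← Finset.mul_sum]; ring
  have hpt : ∀ i, ‖E i‖ ^ 2 ≤ 3 * ‖A i‖ ^ 2 + 3 * ‖B i‖ ^ 2 + 3 * ‖C‖ ^ 2 := by
    intro i
    have h1 : ‖E i‖ ≤ ‖A i‖ + ‖B i‖ + ‖C‖ := by
      rw [hdecomp i]
      exact (norm_add_le _ _).trans (add_le_add_left (norm_add_le _ _) _)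
    nlinarith [norm_nonneg (E i), norm_nonneg (A i), norm_nonneg (B i), norm_nonneg C,
      sq_nonneg (‖A i‖ - ‖B i‖), sq_nonneg (‖A i‖ - ‖C‖), sq_nonneg (‖B i‖ - ‖C‖)]
  set S : ℝ := ∑ i, ‖E i‖ ^ 2 with hS
  have hSnn : 0 ≤ S := Finset.sum_nonneg fun i _ => by positivity
  have hsumA : ∑ i, ‖A i‖ ^ 2 ≤ (L / lam) ^ 2 * S := by
    rw [hS, Finset.mul_sum]
    apply Finset.sum_le_sum
    intro i _
    have := pow_le_pow_left₀ (norm_nonneg (A i)) (hAb i) 2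
    calc ‖A i‖ ^ 2 ≤ ((L / lam) * ‖E i‖) ^ 2 := this
      _ = (L / lam) ^ 2 * ‖E i‖ ^ 2 := by ring
  have hsumB : ∑ i, ‖B i‖ ^ 2 ≤ (n : ℝ) * γg ^ 2 := by
    have h := hdiv θb
    have h2 : (1 / (n : ℝ)) * ∑ i, ‖B i‖ ^ 2 ≤ γg ^ 2 := by
      simpa only [hB] using h
    have h3 : ∑ i, ‖B i‖ ^ 2 = (n : ℝ) * ((1 / (n : ℝ)) * ∑ i, ‖B i‖ ^ 2) := by
      field_simp
    rw [h3]
    exact mul_le_mul_of_nonneg_left h2 hn'.le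
  have hT : (∑ j, ‖E j‖) ^ 2 ≤ (n : ℝ) * S := by
    have := sq_sum_le_card_mul_sum_sq (s := Finset.univ) (f := fun j => ‖E j‖)
    simpa [hS] using this
  have hCsq : (n : ℝ) * ‖C‖ ^ 2 ≤ (L / lam) ^ 2 * S := by
    have hC2 : ‖C‖ ^ 2 ≤ ((L / lam) * ((n : ℝ)⁻¹ * ∑ j, ‖E j‖)) ^ 2 :=
      pow_le_pow_left₀ (norm_nonneg C) hCb 2
    have hLl : 0 ≤ (L / lam) ^ 2 := by positivity
    calc (n : ℝ) * ‖C‖ ^ 2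
        ≤ (n : ℝ) * ((L / lam) * ((n : ℝ)⁻¹ * ∑ j, ‖E j‖)) ^ 2 := by
          exact mul_le_mul_of_nonneg_left hC2 hn'.le
      _ = (L / lam) ^ 2 * ((n : ℝ)⁻¹ * (∑ j, ‖E j‖) ^ 2) := by
          field_simp
      _ ≤ (L / lam) ^ 2 * ((n : ℝ)⁻¹ * ((n : ℝ) * S)) := by
          gcongr
      _ = (L / lam) ^ 2 * S := by field_simp
  have hsumpt : S ≤ 3 * (∑ i, ‖A i‖ ^ 2) + 3 * (∑ i, ‖B i‖ ^ 2) + 3 * ((n : ℝ) * ‖C‖ ^ 2) := by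
    have h := Finset.sum_le_sum (fun i (_ : i ∈ Finset.univ) => hpt i)
    rw [hS]
    calc ∑ i, ‖E i‖ ^ 2 ≤ ∑ i, (3 * ‖A i‖ ^ 2 + 3 * ‖B i‖ ^ 2 + 3 * ‖C‖ ^ 2) := h
      _ = 3 * (∑ i, ‖A i‖ ^ 2) + 3 * (∑ i, ‖B i‖ ^ 2) + 3 * ((n : ℝ) * ‖C‖ ^ 2) := by
          rw [Finset.sum_add_distrib, Finset.sum_add_distrib, ← Finset.mul_sum,
            ← Finset.mul_sum, Finset.sum_const, Finset.card_univ, Fintype.card_fin,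
            nsmul_eq_mul]
          ring
  have hstep : S ≤ 6 * (L / lam) ^ 2 * S + 3 * ((n : ℝ) * γg ^ 2) := by
    linarith [hsumA, hsumB, hCsq, hsumpt]
  have hll : (L / lam) ^ 2 * lam ^ 2 = L ^ 2 := by field_simp
  have hmain : (lam ^ 2 - 6 * L ^ 2) * S ≤ 3 * lam ^ 2 * ((n : ℝ) * γg ^ 2) := by
    have h := mul_le_mul_of_nonneg_left hstep (le_of_lt (by positivity : (0:ℝ) < lam ^ 2))
    have h2 : lam ^ 2 * (6 * (L / lam) ^ 2 * S + 3 * ((n : ℝ) * γg ^ 2))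
        = 6 * ((L / lam) ^ 2 * lam ^ 2) * S + 3 * lam ^ 2 * ((n : ℝ) * γg ^ 2) := by ring
    rw [h2, hll] at h
    linarith
  suffices hfin : (1 / (n : ℝ)) * S ≤ 16 * lam ^ 2 / (lam ^ 2 - 48 * L ^ 2) * γg ^ 2 by
    simpa only [hS, hE] using hfin
  rw [div_mul_eq_mul_div, div_mul_eq_mul_div, div_le_div_iff₀ hn' hden]
  have := aux_final L lam γg S (n : ℝ) hL hlam hn' hSnn hmain
  linarith
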